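/- Let 𝔽 be ℝ or ℂ, let 𝒰 be a nonprincipal ultrafilter on ℕ, and let X be an infinite-dimensional normed space over 𝔽 such that the dual X* contains an isometric copy of ℓ¹, i.e. there is a sequence (e_n*) in X* with ‖Σ_{n≤m} r_n e_n*‖ = Σ_{n≤m}|r_n| for every m and all scalars r_1,…,r_m ∈ 𝔽. Then there exist an index set I of cardinality 2^(2^ℵ₀) and a linear isometric embedding J : ℓ¹(I) → (X^𝒰)* such that J(f) does not belong to the image of the canonical isometry j : (X*)^𝒰 → (X^𝒰)* for any nonzero f ∈ ℓ¹(I). -/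

import Mathlib

/-!
Ultrapowers of normed spaces along a nonprincipal ultrafilter `𝒰` on `ℕ`.

`BoundedSeq X = ℓ∞(X)` is the normed space of bounded sequences in `X` with the sup norm,
`nullSeq 𝕜 𝒰 X = c_𝒰(X)` is the subspace of sequences whose norms tend to `0` along `𝒰`,
and `Ultrapower 𝕜 𝒰 X = ℓ∞(X)/c_𝒰(X)` is the ultrapower, with quotient map `up 𝕜 𝒰`.

The canonical linear isometry `j : (X*)^𝒰 → (X^𝒰)*` sends the class of a (bounded)
sequence of functionals `(f_n)` to the functional `(x_n)^𝒰 ↦ lim_{n→𝒰} f_n(x_n)`; hence a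
functional `φ` on `X^𝒰` lies in the image of `j` if and only if there is a bounded
sequence `(f_n)` in `X*` with `φ((x_n)^𝒰) = lim_{n→𝒰} f_n(x_n)` for every bounded
sequence `(x_n)`.  This is the predicate `InCanonicalImage` below.
-/

open Filter Topology
open scoped ENNReal

noncomputable section

/-- The normed space `ℓ∞(X)` of bounded sequences in `X`, with the sup norm. -/
abbrev BoundedSeq (X : Type*) [NormedAddCommGroup X] := lp (fun _ : ℕ => X) ∞

variable (𝕜 : Type*) [NontriviallyNormedField 𝕜]

/-- `c_𝒰(X)`: the subspace of bounded sequences tending to zero in norm along `𝒰`. -/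
def nullSeq (𝒰 : Ultrafilter ℕ) (X : Type*) [NormedAddCommGroup X] [NormedSpace 𝕜 X] :
    Submodule 𝕜 (BoundedSeq X) where
  carrier := {f | Tendsto (fun n => ‖f n‖) 𝒰 (𝓝 0)}
  zero_mem' := by simp [tendsto_const_nhds]
  add_mem' := by
    intro f g hf hg
    have h := hf.add hg
    rw [add_zero] at h
    exact squeeze_zero (fun n => norm_nonneg _) (fun n => norm_add_le _ _) h
  smul_mem' := by
    intro c f hf
    have h := hf.const_mul ‖c‖
    rw [mul_zero] at h
    exact squeeze_zero (fun n => norm_nonneg _) (fun n => by simp [norm_smul]) h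

/-- The ultrapower `X^𝒰 = ℓ∞(X)/c_𝒰(X)`. -/
abbrev Ultrapower (𝒰 : Ultrafilter ℕ) (X : Type*) [NormedAddCommGroup X] [NormedSpace 𝕜 X] :=
  BoundedSeq X ⧸ nullSeq 𝕜 𝒰 X

/-- The quotient map `ℓ∞(X) → X^𝒰`, `(x_n) ↦ (x_n)^𝒰`. -/
def up (𝒰 : Ultrafilter ℕ) {X : Type*} [NormedAddCommGroup X] [NormedSpace 𝕜 X]
    (f : BoundedSeq X) : Ultrapower 𝕜 𝒰 X := Submodule.Quotient.mk f

/-- `φ : (X^𝒰)*` lies in the image of the canonical linear isometry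
`j : (X*)^𝒰 → (X^𝒰)*` iff it is induced by a bounded sequence of functionals on `X`. -/
def InCanonicalImage (𝒰 : Ultrafilter ℕ) {X : Type*} [NormedAddCommGroup X] [NormedSpace 𝕜 X]
    (φ : StrongDual 𝕜 (Ultrapower 𝕜 𝒰 X)) : Prop :=
  ∃ f : ℕ → StrongDual 𝕜 X, (∃ C : ℝ, ∀ n, ‖f n‖ ≤ C) ∧
    ∀ x : BoundedSeq X, Tendsto (fun n => f n (x n)) 𝒰 (𝓝 (φ (up 𝕜 𝒰 x)))

namespace UPAux

variable {𝕜 : Type*} [RCLike 𝕜]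

open Classical in
/-- Limit of a sequence along an ultrafilter, when it exists. -/
def ulim (𝒱 : Ultrafilter ℕ) (u : ℕ → 𝕜) : 𝕜 :=
  if h : ∃ L, Tendsto u 𝒱 (𝓝 L) then h.choose else 0

theorem tendsto_ulim {𝒱 : Ultrafilter ℕ} {u : ℕ → 𝕜} (h : ∃ L, Tendsto u 𝒱 (𝓝 L)) :
    Tendsto u 𝒱 (𝓝 (ulim 𝒱 u)) := by
  rw [ulim]; rw [dif_pos h]; exact h.choose_spec

theorem ulim_eq {𝒱 : Ultrafilter ℕ} {u : ℕ → 𝕜} {L : 𝕜} (h : Tendsto u 𝒱 (𝓝 L)) :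
    ulim 𝒱 u = L :=
  tendsto_nhds_unique (tendsto_ulim ⟨L, h⟩) h

theorem exists_ulim_of_bound {𝒱 : Ultrafilter ℕ} {u : ℕ → 𝕜} {C : ℝ}
    (hC : ∀ᶠ k in 𝒱, ‖u k‖ ≤ C) : ∃ L, Tendsto u 𝒱 (𝓝 L) := by
  have h1 : ↑(𝒱.map u) ≤ 𝓟 (Metric.closedBall (0 : 𝕜) C) := by
    rw [Filter.le_principal_iff]
    exact Filter.mem_map.2 (hC.mono fun k hk => by
      simpa [Metric.mem_closedBall, dist_eq_norm] using hk)
  obtain ⟨L, _, hL⟩ := (isCompact_closedBall (0 : 𝕜) C).ultrafilter_le_nhds (𝒱.map u) h1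
  exact ⟨L, hL⟩

theorem norm_ulim_le {𝒱 : Ultrafilter ℕ} {u : ℕ → 𝕜} {C : ℝ}
    (hC : ∀ᶠ k in 𝒱, ‖u k‖ ≤ C) : ‖ulim 𝒱 u‖ ≤ C := by
  have h := tendsto_ulim (exists_ulim_of_bound hC)
  exact le_of_tendsto (h.norm) hC

theorem ulim_const {𝒱 : Ultrafilter ℕ} (c : 𝕜) : ulim 𝒱 (fun _ => c) = c :=
  ulim_eq tendsto_const_nhds

theorem ulim_congr {𝒱 : Ultrafilter ℕ} {u v : ℕ → 𝕜} (h : ∀ᶠ n in 𝒱, u n = v n)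
    (hv : ∃ L, Tendsto v 𝒱 (𝓝 L)) : ulim 𝒱 u = ulim 𝒱 v := by
  obtain ⟨L, hL⟩ := hv
  rw [ulim_eq hL, ulim_eq (Tendsto.congr' (h.mono fun n hn => hn.symm) hL)]

end UPAux

namespace UPAux

section Phi

variable {𝕜 : Type*} [RCLike 𝕜] {X : Type*} [NormedAddCommGroup X] [NormedSpace 𝕜 X]

theorem norm_coord_le (x : BoundedSeq X) (k : ℕ) : ‖x k‖ ≤ ‖x‖ :=
  lp.norm_apply_le_norm ENNReal.top_ne_zero x k

variable (𝒰 𝒱 : Ultrafilter ℕ) (e : ℕ → StrongDual 𝕜 X)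

/-- The inner limit `lim_{k→𝒰} e_n(x_k)`. -/
def innerLim (n : ℕ) (x : BoundedSeq X) : 𝕜 := ulim 𝒰 (fun k => e n (x k))

variable {e} (he1 : ∀ n, ‖e n‖ ≤ 1)
include he1

theorem inner_bound (n : ℕ) (x : BoundedSeq X) (k : ℕ) : ‖e n (x k)‖ ≤ ‖x‖ :=
  ((e n).le_opNorm (x k)).trans (by
    calc ‖e n‖ * ‖x k‖ ≤ 1 * ‖x‖ :=
          mul_le_mul (he1 n) (norm_coord_le x k) (norm_nonneg _) zero_le_one
    _ = ‖x‖ := one_mul _)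

theorem innerLim_exists (n : ℕ) (x : BoundedSeq X) :
    ∃ L, Tendsto (fun k => e n (x k)) 𝒰 (𝓝 L) :=
  exists_ulim_of_bound (Eventually.of_forall fun k => inner_bound he1 n x k)

theorem tendsto_innerLim (n : ℕ) (x : BoundedSeq X) :
    Tendsto (fun k => e n (x k)) 𝒰 (𝓝 (innerLim 𝒰 e n x)) :=
  tendsto_ulim (innerLim_exists 𝒰 he1 n x)

theorem innerLim_norm_le (n : ℕ) (x : BoundedSeq X) : ‖innerLim 𝒰 e n x‖ ≤ ‖x‖ :=
  norm_ulim_le (Eventually.of_forall fun k => inner_bound he1 n x k)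

theorem innerLim_add (n : ℕ) (x y : BoundedSeq X) :
    innerLim 𝒰 e n (x + y) = innerLim 𝒰 e n x + innerLim 𝒰 e n y := by
  refine ulim_eq ?_
  have h := (tendsto_innerLim 𝒰 he1 n x).add (tendsto_innerLim 𝒰 he1 n y)
  refine h.congr fun k => ?_
  simp [lp.coeFn_add, Pi.add_apply]

theorem innerLim_smul (n : ℕ) (c : 𝕜) (x : BoundedSeq X) :
    innerLim 𝒰 e n (c • x) = c * innerLim 𝒰 e n x := by
  refine ulim_eq ?_
  have h := (tendsto_innerLim 𝒰 he1 n x).const_mul c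
  refine h.congr fun k => ?_
  simp [lp.coeFn_smul, Pi.smul_apply]

theorem innerLim_null {z : BoundedSeq X} (hz : z ∈ nullSeq 𝕜 𝒰 X) (n : ℕ) :
    innerLim 𝒰 e n z = 0 := by
  have hz' : Tendsto (fun k => ‖z k‖) 𝒰 (𝓝 0) := hz
  refine ulim_eq (squeeze_zero_norm (fun k => ?_) hz')
  calc ‖e n (z k)‖ ≤ ‖e n‖ * ‖z k‖ := (e n).le_opNorm _
  _ ≤ 1 * ‖z k‖ := by gcongr; exact he1 n
  _ = ‖z k‖ := one_mul _

/-- The double limit functional `x ↦ lim_{n→𝒱} lim_{k→𝒰} e_n(x_k)`. -/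
def seqFn (x : BoundedSeq X) : 𝕜 := ulim 𝒱 (fun n => innerLim 𝒰 e n x)

theorem seqFn_exists (x : BoundedSeq X) :
    ∃ L, Tendsto (fun n => innerLim 𝒰 e n x) 𝒱 (𝓝 L) :=
  exists_ulim_of_bound (Eventually.of_forall fun n => innerLim_norm_le 𝒰 he1 n x)

theorem seqFn_norm_le (x : BoundedSeq X) : ‖seqFn 𝒰 𝒱 (e := e) x‖ ≤ ‖x‖ :=
  norm_ulim_le (Eventually.of_forall fun n => innerLim_norm_le 𝒰 he1 n x)

theorem seqFn_add (x y : BoundedSeq X) :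
    seqFn 𝒰 𝒱 (e := e) (x + y) = seqFn 𝒰 𝒱 (e := e) x + seqFn 𝒰 𝒱 (e := e) y := by
  refine ulim_eq ?_
  have h := (tendsto_ulim (seqFn_exists 𝒰 𝒱 he1 x)).add (tendsto_ulim (seqFn_exists 𝒰 𝒱 he1 y))
  exact h.congr fun n => (innerLim_add 𝒰 he1 n x y).symm

theorem seqFn_smul (c : 𝕜) (x : BoundedSeq X) :
    seqFn 𝒰 𝒱 (e := e) (c • x) = c * seqFn 𝒰 𝒱 (e := e) x := by
  refine ulim_eq ?_
  have h := (tendsto_ulim (seqFn_exists 𝒰 𝒱 he1 x)).const_mul c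
  exact h.congr fun n => (innerLim_smul 𝒰 he1 n c x).symm

theorem seqFn_null {z : BoundedSeq X} (hz : z ∈ nullSeq 𝕜 𝒰 X) :
    seqFn 𝒰 𝒱 (e := e) z = 0 := by
  refine ulim_eq ?_
  have : (fun n => innerLim 𝒰 e n z) = fun _ => (0 : 𝕜) := by
    funext n; exact innerLim_null 𝒰 he1 hz n
  rw [this]; exact tendsto_const_nhds

/-- `seqFn` as a linear map. -/
def seqFnLin : BoundedSeq X →ₗ[𝕜] 𝕜 where
  toFun := seqFn 𝒰 𝒱 (e := e)
  map_add' := seqFn_add 𝒰 𝒱 he1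
  map_smul' := seqFn_smul 𝒰 𝒱 he1

theorem nullSeq_le_ker : nullSeq 𝕜 𝒰 X ≤ LinearMap.ker (seqFnLin 𝒰 𝒱 he1) :=
  fun z hz => LinearMap.mem_ker.2 (seqFn_null 𝒰 𝒱 he1 hz)

/-- The limit functional on the ultrapower. -/
def phi : StrongDual 𝕜 (Ultrapower 𝕜 𝒰 X) := by
  refine LinearMap.mkContinuous
    (Submodule.liftQ _ (seqFnLin 𝒰 𝒱 he1) (nullSeq_le_ker 𝒰 𝒱 he1)) 1 ?_
  intro q
  obtain ⟨m, rfl⟩ := Submodule.Quotient.mk_surjective _ q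
  rw [one_mul]
  refine le_of_forall_pos_le_add fun ε hε => ?_
  obtain ⟨m', hm', hlt⟩ :=
    Submodule.Quotient.norm_mk_lt (Submodule.Quotient.mk (p := nullSeq 𝕜 𝒰 X) m) hε
  have heq : Submodule.liftQ _ (seqFnLin 𝒰 𝒱 he1) (nullSeq_le_ker 𝒰 𝒱 he1)
      (Submodule.Quotient.mk m) = seqFn 𝒰 𝒱 (e := e) m' := by
    rw [← hm', Submodule.liftQ_apply]; rfl
  rw [heq]
  exact le_trans (seqFn_norm_le 𝒰 𝒱 he1 m') hlt.le

theorem phi_norm_le : ‖phi 𝒰 𝒱 he1‖ ≤ 1 :=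
  LinearMap.mkContinuous_norm_le _ zero_le_one _

theorem phi_apply_up (x : BoundedSeq X) :
    phi 𝒰 𝒱 he1 (up 𝕜 𝒰 x) = ulim 𝒱 (fun n => ulim 𝒰 (fun k => e n (x k))) := rfl

end Phi

end UPAux

namespace UPAux

section Pattern

variable {𝕜 : Type*} [RCLike 𝕜] {X : Type*} [NormedAddCommGroup X] [NormedSpace 𝕜 X]
variable {e : ℕ → StrongDual 𝕜 X}
variable (he : ∀ (m : ℕ) (r : ℕ → 𝕜),
    ‖∑ n ∈ Finset.range m, r n • e n‖ = ∑ n ∈ Finset.range m, ‖r n‖)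
include he

theorem norm_e (n : ℕ) : ‖e n‖ = 1 := by
  have h := he (n + 1) (fun j => if j = n then (1 : 𝕜) else 0)
  have hz : ∀ x, (0:𝕜) • e x = 0 := fun x => by exact zero_smul 𝕜 (e x)
  simp only [ite_smul, one_smul, hz, apply_ite (norm : 𝕜 → ℝ), norm_one, norm_zero,
    Finset.sum_ite_eq', Finset.mem_range, Nat.lt_succ_self, if_true] at h
  exact h

set_option maxHeartbeats 1000000 in
theorem realize_unimodular (k : ℕ) {δ : ℝ} (hδ : 0 < δ) (s : ℕ → 𝕜) (hs : ∀ n, ‖s n‖ = 1) :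
    ∃ x : X, ‖x‖ ≤ 1 ∧ ∀ n < k, ‖e n x - s n‖ ≤ δ := by
  rcases Nat.eq_zero_or_pos k with hk | hk
  · exact ⟨0, by simp, fun n hn => by omega⟩
  have hk1 : (1 : ℝ) ≤ (k : ℝ) := by exact_mod_cast hk
  set δ' : ℝ := min (δ ^ 2 / 2) 2⁻¹ with hδ'def
  have hδ'pos : 0 < δ' := lt_min (by positivity) (by norm_num)
  have hδ'half : δ' ≤ 2⁻¹ := min_le_right _ _
  have hδ'sq : 2 * δ' ≤ δ ^ 2 := by
    have := min_le_left (δ ^ 2 / 2) 2⁻¹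
    linarith [this]
  set G := ∑ n ∈ Finset.range k, (starRingEnd 𝕜) (s n) • e n with hGdef
  have hGnorm : ‖G‖ = (k : ℝ) := by
    rw [hGdef, he k]
    have h1 : ∀ n ∈ Finset.range k, ‖(starRingEnd 𝕜) (s n)‖ = (1 : ℝ) := fun n _ => by
      rw [RCLike.norm_conj]; exact hs n
    rw [Finset.sum_congr rfl h1, Finset.sum_const, Finset.card_range, nsmul_eq_mul, mul_one]
  have hr : (k : ℝ) - δ' < ‖G‖ := by rw [hGnorm]; linarith
  obtain ⟨x₀, hx₀, hGx₀⟩ := G.exists_lt_apply_of_lt_opNorm hr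
  have hGx₀pos : 0 < ‖G x₀‖ := by
    refine lt_of_lt_of_le ?_ hGx₀.le
    have : δ' < 1 := lt_of_le_of_lt hδ'half (by norm_num)
    linarith
  have hGx₀ne : G x₀ ≠ 0 := by
    intro h; rw [h, norm_zero] at hGx₀pos; exact lt_irrefl _ hGx₀pos
  set σ : 𝕜 := (starRingEnd 𝕜) (G x₀) / ((‖G x₀‖ : ℝ) : 𝕜) with hσdef
  have hσ : ‖σ‖ = 1 := by
    rw [hσdef, norm_div, RCLike.norm_conj, RCLike.norm_ofReal, abs_of_pos hGx₀pos,
      div_self hGx₀pos.ne']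
  set x := σ • x₀ with hxdef
  have hxnorm : ‖x‖ ≤ 1 := by
    rw [hxdef, norm_smul, hσ, one_mul]; exact hx₀.le
  have hGx : G x = ((‖G x₀‖ : ℝ) : 𝕜) := by
    rw [hxdef, map_smul, smul_eq_mul, hσdef, div_mul_eq_mul_div, RCLike.conj_mul]
    rw [show ((‖G x₀‖ : ℝ) : 𝕜) ^ 2 = ((‖G x₀‖ : ℝ) : 𝕜) * ((‖G x₀‖ : ℝ) : 𝕜) from sq _]
    rw [mul_div_assoc]
    rw [div_self (by simpa [RCLike.ofReal_eq_zero] using hGx₀pos.ne')]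
    rw [mul_one]
  -- each coordinate value
  set T : ℕ → ℝ := fun m => RCLike.re ((starRingEnd 𝕜) (s m) * e m x) with hTdef
  have hTsum : ∑ m ∈ Finset.range k, T m = ‖G x₀‖ := by
    have : G x = ∑ m ∈ Finset.range k, (starRingEnd 𝕜) (s m) * e m x := by
      rw [hGdef, ContinuousLinearMap.sum_apply]
      exact Finset.sum_congr rfl fun m _ => by
        rw [ContinuousLinearMap.smul_apply, smul_eq_mul]
    rw [hTdef]
    calc ∑ m ∈ Finset.range k, RCLike.re ((starRingEnd 𝕜) (s m) * e m x)
        = RCLike.re (∑ m ∈ Finset.range k, (starRingEnd 𝕜) (s m) * e m x) := by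
          rw [map_sum]
      _ = RCLike.re (G x) := by rw [← this]
      _ = ‖G x₀‖ := by rw [hGx, RCLike.ofReal_re]
  have hTle : ∀ m < k, T m ≤ 1 := by
    intro m _
    rw [hTdef]
    calc RCLike.re ((starRingEnd 𝕜) (s m) * e m x) ≤ ‖(starRingEnd 𝕜) (s m) * e m x‖ :=
          RCLike.re_le_norm _
      _ = ‖e m x‖ := by rw [norm_mul, RCLike.norm_conj, hs m, one_mul]
      _ ≤ ‖e m‖ * ‖x‖ := (e m).le_opNorm _
      _ ≤ 1 * 1 := mul_le_mul (le_of_eq (norm_e he m)) hxnorm (norm_nonneg _) zero_le_one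
      _ = 1 := one_mul _
  refine ⟨x, hxnorm, fun n hn => ?_⟩
  have hTn : 1 - δ' ≤ T n := by
    have hmem : n ∈ Finset.range k := Finset.mem_range.2 hn
    have hsplit : T n + ∑ m ∈ (Finset.range k).erase n, T m = ∑ m ∈ Finset.range k, T m :=
      Finset.add_sum_erase _ _ hmem
    have hbound : ∑ m ∈ (Finset.range k).erase n, T m ≤ ((k : ℝ) - 1) := by
      have hcard : ((Finset.range k).erase n).card = k - 1 := by
        rw [Finset.card_erase_of_mem hmem, Finset.card_range]
      calc ∑ m ∈ (Finset.range k).erase n, T m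
          ≤ ∑ _m ∈ (Finset.range k).erase n, (1 : ℝ) := by
            refine Finset.sum_le_sum fun m hm => hTle m ?_
            exact Finset.mem_range.1 (Finset.mem_of_mem_erase hm)
        _ = ((k - 1 : ℕ) : ℝ) := by rw [Finset.sum_const, hcard, nsmul_eq_mul, mul_one]
        _ ≤ (k : ℝ) - 1 := by
            rw [Nat.cast_sub hk]; norm_num
    have : (k : ℝ) - δ' < T n + ((k : ℝ) - 1) := by
      calc (k : ℝ) - δ' < ‖G x₀‖ := hGx₀
        _ = T n + ∑ m ∈ (Finset.range k).erase n, T m := by rw [hsplit, hTsum]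
        _ ≤ T n + ((k : ℝ) - 1) := by linarith
    linarith
  -- z := conj (s n) * (e n x)
  set z : 𝕜 := (starRingEnd 𝕜) (s n) * e n x with hzdef
  have hznorm : ‖z‖ ≤ 1 := by
    rw [hzdef, norm_mul, RCLike.norm_conj, hs n, one_mul]
    calc ‖e n x‖ ≤ ‖e n‖ * ‖x‖ := (e n).le_opNorm _
      _ ≤ 1 * 1 := mul_le_mul (le_of_eq (norm_e he n)) hxnorm (norm_nonneg _) zero_le_one
      _ = 1 := one_mul _
  have hzre : 1 - δ' ≤ RCLike.re z := hTn
  have hsub : ‖z - 1‖ ^ 2 ≤ δ ^ 2 := by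
    have h1 : ‖z - 1‖ ^ 2 = ‖z‖ ^ 2 - 2 * RCLike.re z + 1 := by
      rw [RCLike.norm_sq_eq_def (z := z - 1), RCLike.norm_sq_eq_def (z := z)]
      simp only [map_sub, RCLike.one_re, RCLike.one_im, sub_zero]
      ring
    have h2 : ‖z‖ ^ 2 ≤ 1 := by nlinarith [norm_nonneg z]
    calc ‖z - 1‖ ^ 2 = ‖z‖ ^ 2 - 2 * RCLike.re z + 1 := h1
      _ ≤ 1 - 2 * (1 - δ') + 1 := by nlinarith
      _ = 2 * δ' := by ring
      _ ≤ δ ^ 2 := hδ'sq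
  have hzval : ‖z - 1‖ ≤ δ := by nlinarith [norm_nonneg (z - 1)]
  have hfinal : e n x - s n = s n * (z - 1) := by
    rw [hzdef, mul_sub, mul_one, ← mul_assoc, RCLike.mul_conj]
    rw [show ((‖s n‖ : ℝ) : 𝕜) ^ 2 = ((1 : ℝ) : 𝕜) ^ 2 by rw [hs n]]
    simp
  rw [hfinal, norm_mul, hs n, one_mul]
  exact hzval

theorem realize_pattern (k : ℕ) {δ : ℝ} (hδ : 0 < δ) (t : ℕ → 𝕜)
    (ht : ∀ n, t n = 0 ∨ ‖t n‖ = 1) :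
    ∃ x : X, ‖x‖ ≤ 1 ∧ ∀ n < k, ‖e n x - t n‖ ≤ δ := by
  obtain ⟨x₁, hx₁, h₁⟩ := realize_unimodular he k hδ (fun n => if t n = 0 then 1 else t n)
    (fun n => by by_cases h : t n = 0 <;> simp [h] <;> exact (ht n).resolve_left h)
  obtain ⟨x₂, hx₂, h₂⟩ := realize_unimodular he k hδ (fun n => if t n = 0 then -1 else t n)
    (fun n => by by_cases h : t n = 0 <;> simp [h] <;> exact (ht n).resolve_left h)
  refine ⟨(2 : 𝕜)⁻¹ • (x₁ + x₂), ?_, ?_⟩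
  · rw [norm_smul, norm_inv, RCLike.norm_ofNat]
    calc 2⁻¹ * ‖x₁ + x₂‖ ≤ 2⁻¹ * (‖x₁‖ + ‖x₂‖) := by gcongr; exact norm_add_le _ _
      _ ≤ 2⁻¹ * (1 + 1) := by gcongr
      _ = 1 := by norm_num
  · intro n hn
    have hval : e n ((2 : 𝕜)⁻¹ • (x₁ + x₂)) - t n
        = (2 : 𝕜)⁻¹ * ((e n x₁ - (if t n = 0 then 1 else t n))
          + (e n x₂ - (if t n = 0 then -1 else t n))) := by
      rw [map_smul, map_add, smul_eq_mul]
      have hsum : (if t n = 0 then (1 : 𝕜) else t n) + (if t n = 0 then -1 else t n)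
          = 2 * t n := by by_cases h : t n = 0 <;> simp [h] <;> ring
      linear_combination (2 : 𝕜)⁻¹ * hsum
    rw [hval, norm_mul, norm_inv, RCLike.norm_ofNat]
    calc 2⁻¹ * ‖(e n x₁ - (if t n = 0 then 1 else t n))
          + (e n x₂ - (if t n = 0 then -1 else t n))‖
        ≤ 2⁻¹ * (‖e n x₁ - (if t n = 0 then 1 else t n)‖
          + ‖e n x₂ - (if t n = 0 then -1 else t n)‖) := by gcongr; exact norm_add_le _ _
      _ ≤ 2⁻¹ * (δ + δ) := by gcongr <;> [exact h₁ n hn; exact h₂ n hn]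
      _ = δ := by ring

end Pattern

end UPAux

namespace UPAux

section UltraComb

theorem exists_separating {𝒱 𝒲 : Ultrafilter ℕ} (h : 𝒱 ≠ 𝒲) :
    ∃ S : Set ℕ, S ∈ 𝒱 ∧ Sᶜ ∈ 𝒲 := by
  by_contra hc
  push_neg at hc
  apply h
  apply Ultrafilter.coe_injective
  apply Filter.ext
  intro S
  constructor
  · intro hS
    exact Ultrafilter.compl_notMem_iff.1 (hc S hS)
  · intro hS
    by_contra hS'
    have h1 : Sᶜ ∈ 𝒱 := (Ultrafilter.compl_mem_iff_notMem).2 hS'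
    have h2 := hc _ h1
    rw [compl_compl] at h2
    exact h2 hS

theorem exists_disjoint_mem {ι : Type*} [DecidableEq ι] (F : Finset ι) (V : ι → Ultrafilter ℕ)
    (hV : ∀ i ∈ F, ∀ j ∈ F, i ≠ j → V i ≠ V j) :
    ∃ A : ι → Set ℕ, (∀ i ∈ F, A i ∈ V i) ∧
      ∀ i ∈ F, ∀ j ∈ F, i ≠ j → Disjoint (A i) (A j) := by
  have hsep : ∀ i j, ∃ S : Set ℕ, i ∈ F → j ∈ F → i ≠ j → S ∈ V i ∧ Sᶜ ∈ V j := by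
    intro i j
    by_cases h : i ∈ F ∧ j ∈ F ∧ i ≠ j
    · obtain ⟨S, h1, h2⟩ := exists_separating (hV i h.1 j h.2.1 h.2.2)
      exact ⟨S, fun _ _ _ => ⟨h1, h2⟩⟩
    · exact ⟨∅, fun h1 h2 h3 => absurd ⟨h1, h2, h3⟩ h⟩
  choose S hS using hsep
  refine ⟨fun i => (⋂ j ∈ F.erase i, S i j) ∩ (⋂ j ∈ F.erase i, (S j i)ᶜ), ?_, ?_⟩
  · intro i hi
    refine Filter.inter_mem ?_ ?_
    · refine (Filter.biInter_finset_mem _).2 fun j hj => ?_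
      obtain ⟨hji, hjF⟩ := Finset.mem_erase.1 hj
      exact (hS i j hi hjF (Ne.symm hji)).1
    · refine (Filter.biInter_finset_mem _).2 fun j hj => ?_
      obtain ⟨hji, hjF⟩ := Finset.mem_erase.1 hj
      exact (hS j i hjF hi hji).2
  · intro i hi j hj hij
    rw [Set.disjoint_left]
    intro a ha hb
    have h1 : a ∈ S i j := by
      have := ha.1
      rw [Set.mem_iInter₂] at this
      exact this j (Finset.mem_erase.2 ⟨Ne.symm hij, hj⟩)
    have h2 : a ∈ (S i j)ᶜ := by
      have := hb.2
      rw [Set.mem_iInter₂] at this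
      exact this i (Finset.mem_erase.2 ⟨hij, hi⟩)
    exact h2 h1

end UltraComb

section Pospisil

/-- Base set for the independent family construction. -/
abbrev BaseSet := Finset ℕ × Finset (Finset ℕ)

/-- Classical intersection of a finset with a set. -/
def finInter (F : Finset ℕ) (Y : Set ℕ) : Finset ℕ :=
  @Finset.filter _ (· ∈ Y) (Classical.decPred _) F

theorem mem_finInter {F : Finset ℕ} {Y : Set ℕ} {n : ℕ} :
    n ∈ finInter F Y ↔ n ∈ F ∧ n ∈ Y := by
  unfold finInter
  letI : DecidablePred (· ∈ Y) := Classical.decPred _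
  exact Finset.mem_filter

/-- The independent family indexed by `Set ℕ`. -/
def indepSet (Y : Set ℕ) : Set BaseSet := {p | finInter p.1 Y ∈ p.2}

open Classical in
/-- A finset of naturals separating the finitely many sets in `G`. -/
noncomputable def sepFinset (G : Finset (Set ℕ)) : Finset ℕ :=
  (G ×ˢ G).image fun q =>
    if h : ∃ n, (n ∈ q.1 ∧ n ∉ q.2) ∨ (n ∈ q.2 ∧ n ∉ q.1) then h.choose else 0

theorem sep_spec {G : Finset (Set ℕ)} {Y Z : Set ℕ} (hY : Y ∈ G) (hZ : Z ∈ G) (hne : Y ≠ Z)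
    {F : Finset ℕ} (hF : sepFinset G ⊆ F) :
    finInter F Y ≠ finInter F Z := by
  classical
  have hex : ∃ n, (n ∈ Y ∧ n ∉ Z) ∨ (n ∈ Z ∧ n ∉ Y) := by
    by_contra hc
    push_neg at hc
    apply hne
    ext n
    have := hc n
    tauto
  set n₀ := if h : ∃ n, (n ∈ Y ∧ n ∉ Z) ∨ (n ∈ Z ∧ n ∉ Y) then h.choose else 0 with hn₀
  have hn₀spec : (n₀ ∈ Y ∧ n₀ ∉ Z) ∨ (n₀ ∈ Z ∧ n₀ ∉ Y) := by
    rw [hn₀, dif_pos hex]; exact hex.choose_spec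
  have hn₀mem : n₀ ∈ sepFinset G := by
    rw [sepFinset, Finset.mem_image]
    exact ⟨(Y, Z), Finset.mem_product.2 ⟨hY, hZ⟩, by rw [hn₀]⟩
  have hn₀F : n₀ ∈ F := hF hn₀mem
  intro heq
  rcases hn₀spec with ⟨h1, h2⟩ | ⟨h1, h2⟩
  · have : n₀ ∈ finInter F Y := mem_finInter.2 ⟨hn₀F, h1⟩
    rw [heq] at this
    exact h2 (mem_finInter.1 this).2
  · have : n₀ ∈ finInter F Z := mem_finInter.2 ⟨hn₀F, h1⟩
    rw [← heq] at this
    exact h2 (mem_finInter.1 this).2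

open Classical in
/-- Witness points in the intersections of the independent family. -/
noncomputable def witness (f : Set ℕ → Bool) (G : Finset (Set ℕ)) (m : ℕ) : BaseSet :=
  ⟨sepFinset G ∪ {(sepFinset G).sup id + 1 + m},
    (G.filter (fun Y => f Y = true)).image
      (fun Y => finInter (sepFinset G ∪ {(sepFinset G).sup id + 1 + m}) Y)⟩

theorem witness_mem_true {f : Set ℕ → Bool} {G : Finset (Set ℕ)} {Y : Set ℕ}
    (hY : Y ∈ G) (hfY : f Y = true) (m : ℕ) : witness f G m ∈ indepSet Y := by
  classical
  rw [indepSet, Set.mem_setOf_eq, witness, Finset.mem_image]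
  exact ⟨Y, Finset.mem_filter.2 ⟨hY, hfY⟩, rfl⟩

theorem witness_not_mem_false {f : Set ℕ → Bool} {G : Finset (Set ℕ)} {Y : Set ℕ}
    (hY : Y ∈ G) (hfY : f Y = false) (m : ℕ) : witness f G m ∉ indepSet Y := by
  classical
  rw [indepSet, Set.mem_setOf_eq, witness, Finset.mem_image]
  rintro ⟨Z, hZ, hZY⟩
  obtain ⟨hZG, hfZ⟩ := Finset.mem_filter.1 hZ
  have hne : Z ≠ Y := by
    intro h; rw [h, hfY] at hfZ; simp at hfZ
  exact sep_spec hZG hY hne Finset.subset_union_left hZY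

theorem witness_injective (f : Set ℕ → Bool) (G : Finset (Set ℕ)) :
    Function.Injective (witness f G) := by
  intro m m' h
  have h1 : (witness f G m).1 = (witness f G m').1 := by rw [h]
  rw [witness, witness] at h1
  simp only at h1
  have hnotmem : ∀ l : ℕ, (sepFinset G).sup id + 1 + l ∉ sepFinset G := by
    intro l hl
    have := Finset.le_sup (f := id) hl
    simp only [id] at this
    omega
  have hm : (sepFinset G).sup id + 1 + m ∈
      sepFinset G ∪ {(sepFinset G).sup id + 1 + m'} := by
    rw [← h1]
    exact Finset.mem_union_right _ (Finset.mem_singleton_self _)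
  rcases Finset.mem_union.1 hm with hmem | hmem
  · exact absurd hmem (hnotmem m)
  · have := Finset.mem_singleton.1 hmem
    omega

/-- The family of basic sets for `f`. -/
def famSet (f : Set ℕ → Bool) : Set (Set BaseSet) :=
  {s | ∃ Y, s = if f Y = true then indepSet Y else (indepSet Y)ᶜ}

theorem sInter_infinite (f : Set ℕ → Bool) {t : Set (Set BaseSet)} (htfin : t.Finite)
    (ht : t ⊆ famSet f) : (⋂₀ t).Infinite := by
  classical
  have hφ : ∀ s : t, ∃ Y, (s : Set BaseSet) = if f Y = true then indepSet Y
      else (indepSet Y)ᶜ := fun s => ht s.2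
  choose φ hφspec using hφ
  haveI : Finite t := htfin
  have hfin : (Set.range φ).Finite := Set.finite_range φ
  set G : Finset (Set ℕ) := hfin.toFinset with hG
  refine Set.infinite_of_injective_forall_mem (witness_injective f G) ?_
  intro m
  rw [Set.mem_sInter]
  intro s hs
  have hmem : φ ⟨s, hs⟩ ∈ G := by
    rw [hG, Set.Finite.mem_toFinset]
    exact Set.mem_range_self _
  have hspec := hφspec ⟨s, hs⟩
  rcases hb : f (φ ⟨s, hs⟩) with _ | _
  · rw [hb, if_neg (by simp)] at hspec
    have hs2 : s = (indepSet (φ ⟨s, hs⟩))ᶜ := hspec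
    rw [hs2]
    exact witness_not_mem_false hmem hb m
  · rw [hb, if_pos rfl] at hspec
    have hs2 : s = indepSet (φ ⟨s, hs⟩) := hspec
    rw [hs2]
    exact witness_mem_true hmem hb m

/-- The filter generated by the independent family and the cofinite filter. -/
def bigFilter (f : Set ℕ → Bool) : Filter BaseSet :=
  Filter.generate (famSet f) ⊓ Filter.cofinite

theorem bigFilter_neBot (f : Set ℕ → Bool) : (bigFilter f).NeBot := by
  rw [bigFilter, Filter.inf_neBot_iff]
  intro s hs s' hs'
  obtain ⟨t, htsub, htfin, hsub⟩ := Filter.mem_generate_iff.1 hs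
  have hinf := sInter_infinite f htfin htsub
  have : ((⋂₀ t) ∩ s').Infinite := by
    have : (⋂₀ t) \ s'ᶜ = (⋂₀ t) ∩ s' := by
      ext p; simp [Set.mem_diff]
    rw [← this]
    exact hinf.diff hs'
  exact this.nonempty.mono (Set.inter_subset_inter_left _ hsub)

/-- An ultrafilter extending the independent family selection `f`. -/
noncomputable def UF (f : Set ℕ → Bool) : Ultrafilter BaseSet :=
  haveI := bigFilter_neBot f
  Ultrafilter.of (bigFilter f)

theorem UF_le_cofinite (f : Set ℕ → Bool) : (UF f : Filter BaseSet) ≤ Filter.cofinite := by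
  haveI := bigFilter_neBot f
  exact (Ultrafilter.of_le (bigFilter f)).trans inf_le_right

theorem mem_UF {f : Set ℕ → Bool} {Y : Set ℕ} :
    indepSet Y ∈ UF f ↔ f Y = true := by
  haveI := bigFilter_neBot f
  have hmem : (if f Y = true then indepSet Y else (indepSet Y)ᶜ) ∈ UF f := by
    refine (Ultrafilter.of_le (bigFilter f)) ?_
    exact Filter.mem_inf_of_left (Filter.mem_generate_of_mem ⟨Y, rfl⟩)
  constructor
  · intro h
    by_contra hb
    rw [if_neg hb] at hmem
    exact (Ultrafilter.compl_mem_iff_notMem.1 hmem) h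
  · intro h
    rwa [if_pos h] at hmem

theorem UF_injective : Function.Injective UF := by
  intro f g h
  funext Y
  by_contra hb
  rcases hf : f Y with _ | _ <;> rcases hg : g Y with _ | _
  · rw [hf, hg] at hb; exact hb rfl
  · have h1 : indepSet Y ∈ UF g := mem_UF.2 hg
    rw [← h] at h1
    rw [mem_UF.1 h1] at hf
    simp at hf
  · have h1 : indepSet Y ∈ UF f := mem_UF.2 hf
    rw [h] at h1
    rw [mem_UF.1 h1] at hg
    simp at hg
  · rw [hf, hg] at hb; exact hb rfl

noncomputable instance : Denumerable BaseSet := by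
  have : Infinite BaseSet := by
    have : Function.Injective (fun n : ℕ => (({n} : Finset ℕ), (∅ : Finset (Finset ℕ)))) := by
      intro a b h
      simpa using congrArg (fun p => p.1) h
    exact Infinite.of_injective _ this
  exact Denumerable.ofEncodableOfInfinite BaseSet

/-- Transfer an ultrafilter on `BaseSet` to one on `ℕ`. -/
noncomputable def toNatUF (U : Ultrafilter BaseSet) : Ultrafilter ℕ :=
  U.map (Denumerable.eqv BaseSet)

theorem toNatUF_le_cofinite {U : Ultrafilter BaseSet}
    (hU : (U : Filter BaseSet) ≤ Filter.cofinite) :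
    (toNatUF U : Filter ℕ) ≤ Filter.cofinite := by
  intro s hs
  rw [toNatUF, Ultrafilter.coe_map, Filter.mem_map]
  apply hU
  rw [Filter.mem_cofinite] at hs ⊢
  rw [← Set.preimage_compl]
  exact hs.preimage ((Denumerable.eqv BaseSet).injective.injOn)

theorem toNatUF_injective : Function.Injective toNatUF := by
  intro U V h
  apply Ultrafilter.coe_injective
  have h1 : (toNatUF U : Filter ℕ) = (toNatUF V : Filter ℕ) := by rw [h]
  rw [toNatUF, toNatUF, Ultrafilter.coe_map, Ultrafilter.coe_map] at h1
  have h2 := congrArg (Filter.map (Denumerable.eqv BaseSet).symm) h1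
  rw [Filter.map_map, Filter.map_map] at h2
  simpa [Equiv.symm_comp_self, Filter.map_id] using h2

theorem exists_inj_ultrafilters :
    ∃ g : (Set ℕ → Bool) → {𝒱 : Ultrafilter ℕ // (𝒱 : Filter ℕ) ≤ Filter.cofinite},
      Function.Injective g := by
  refine ⟨fun f => ⟨toNatUF (UF f), toNatUF_le_cofinite (UF_le_cofinite f)⟩, ?_⟩
  intro f g h
  exact UF_injective (toNatUF_injective (congrArg Subtype.val h))

theorem card_nonprincipal_ultrafilters :
    Cardinal.mk {𝒱 : Ultrafilter ℕ // (𝒱 : Filter ℕ) ≤ Filter.cofinite}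
      = (2 : Cardinal) ^ ((2 : Cardinal) ^ Cardinal.aleph0) := by
  apply le_antisymm
  · have h1 : Cardinal.mk {𝒱 : Ultrafilter ℕ // (𝒱 : Filter ℕ) ≤ Filter.cofinite}
        ≤ Cardinal.mk (Ultrafilter ℕ) := Cardinal.mk_subtype_le _
    have h2 : Cardinal.mk (Ultrafilter ℕ) ≤ Cardinal.mk (Set (Set ℕ)) := by
      refine Cardinal.mk_le_of_injective (f := fun U => {s : Set ℕ | s ∈ U}) ?_
      intro U V h
      apply Ultrafilter.coe_injective
      apply Filter.ext
      intro s
      exact ⟨fun hs => (Set.ext_iff.1 h s).1 hs, fun hs => (Set.ext_iff.1 h s).2 hs⟩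
    refine (h1.trans h2).trans_eq ?_
    rw [Cardinal.mk_set, Cardinal.mk_set, Cardinal.mk_nat]
  · obtain ⟨g, hg⟩ := exists_inj_ultrafilters
    have h3 := Cardinal.mk_le_of_injective hg
    refine le_trans (le_of_eq ?_) h3
    rw [Cardinal.mk_arrow, Cardinal.mk_bool, Cardinal.mk_set, Cardinal.mk_nat,
      Cardinal.lift_id, Cardinal.lift_id]

end Pospisil

end UPAux

namespace UPAux

section MainAux

variable {𝕜 : Type*} [RCLike 𝕜] {X : Type*} [NormedAddCommGroup X] [NormedSpace 𝕜 X]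

theorem exists_tail_small {ι : Type*} {g : ι → ℝ} (hg : Summable g) {ε : ℝ} (hε : 0 < ε) :
    ∃ F : Finset ι, ∑' i : ↑((↑F : Set ι)ᶜ), g i < ε := by
  classical
  obtain ⟨Sg, hS⟩ := hg
  have hS' : Tendsto (fun T : Finset ι => ∑ b ∈ T, g b) Filter.atTop (𝓝 Sg) := hS
  obtain ⟨T, hT⟩ := ((Metric.tendsto_nhds.1 hS') ε hε).exists
  refine ⟨T, ?_⟩
  have h2 : (∑ b ∈ T, g b) + ∑' (i : ↑((↑T : Set ι)ᶜ)), g i = Sg := by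
    rw [Summable.sum_add_tsum_compl ⟨Sg, hS⟩]
    exact hS.tsum_eq
  have h3 : ∑' (i : ↑((↑T : Set ι)ᶜ)), g i = Sg - ∑ b ∈ T, g b := by linarith
  rw [h3]
  calc Sg - ∑ b ∈ T, g b ≤ |Sg - ∑ b ∈ T, g b| := le_abs_self _
    _ = dist (∑ b ∈ T, g b) Sg := by rw [Real.dist_eq, abs_sub_comm]
    _ < ε := hT

theorem ulim_eventually_const {𝒱 : Ultrafilter ℕ} {t : ℕ → 𝕜} {c : 𝕜}
    (h : ∀ᶠ n in 𝒱, t n = c) : ulim 𝒱 t = c :=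
  ulim_eq (Tendsto.congr' (h.mono fun n hn => hn.symm) tendsto_const_nhds)

open Classical in
theorem ulim_charfn (𝒱 : Ultrafilter ℕ) (T : Set ℕ) (t : ℕ → 𝕜)
    (h1 : ∀ n ∈ T, t n = 1) (h0 : ∀ n ∉ T, t n = 0) :
    ulim 𝒱 t = if T ∈ 𝒱 then 1 else 0 := by
  by_cases hT : T ∈ 𝒱
  · rw [if_pos hT]
    refine ulim_eventually_const ?_
    have hev : ∀ᶠ n in 𝒱, n ∈ T := by rwa [Filter.eventually_iff, Set.setOf_mem_eq]
    filter_upwards [hev] with n hn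
    exact h1 n hn
  · rw [if_neg hT]
    have hTc : Tᶜ ∈ 𝒱 := Ultrafilter.compl_mem_iff_notMem.2 hT
    refine ulim_eventually_const ?_
    have hev : ∀ᶠ n in 𝒱, n ∈ Tᶜ := by rwa [Filter.eventually_iff, Set.setOf_mem_eq]
    filter_upwards [hev] with n hn
    exact h0 n hn

/-- Build an element of `ℓ∞(X)` from a pointwise-bounded sequence. -/
def mkBounded (x : ℕ → X) (hx : ∀ k, ‖x k‖ ≤ 1) : BoundedSeq X :=
  ⟨x, memℓp_infty ⟨1, by rintro r ⟨k, rfl⟩; exact hx k⟩⟩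

@[simp] theorem mkBounded_apply (x : ℕ → X) (hx : ∀ k, ‖x k‖ ≤ 1) (k : ℕ) :
    (mkBounded x hx : ∀ _ : ℕ, X) k = x k := rfl

theorem mkBounded_norm_le (x : ℕ → X) (hx : ∀ k, ‖x k‖ ≤ 1) : ‖mkBounded x hx‖ ≤ 1 :=
  lp.norm_le_of_forall_le zero_le_one hx

variable {𝒰 : Ultrafilter ℕ} (h𝒰 : (𝒰 : Filter ℕ) ≤ Filter.cofinite)
variable {e : ℕ → StrongDual 𝕜 X}
variable (he : ∀ (m : ℕ) (r : ℕ → 𝕜),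
    ‖∑ n ∈ Finset.range m, r n • e n‖ = ∑ n ∈ Finset.range m, ‖r n‖)

include h𝒰 in
theorem mem_large (d : ℕ) : {k : ℕ | d ≤ k} ∈ 𝒰 := by
  apply h𝒰
  rw [Filter.mem_cofinite]
  refine (Set.finite_Iio d).subset ?_
  intro k hk
  simpa [Set.mem_Iio, not_le] using hk

include h𝒰 in
theorem eventually_large (d : ℕ) : ∀ᶠ k in (𝒰 : Filter ℕ), d ≤ k := by
  have := mem_large h𝒰 d
  rwa [Filter.eventually_iff]

include h𝒰 in
theorem tendsto_one_div_succ : Tendsto (fun k : ℕ => 1 / ((k : ℝ) + 1)) 𝒰 (𝓝 0) :=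
  tendsto_one_div_add_atTop_nhds_zero_nat.mono_left (by rw [← Nat.cofinite_eq_atTop]; exact h𝒰)

include he in
theorem exists_patternSeq (t : ℕ → 𝕜) (ht : ∀ n, t n = 0 ∨ ‖t n‖ = 1) :
    ∃ x : BoundedSeq X, ‖x‖ ≤ 1 ∧ ∀ k n, n < k → ‖e n (x k) - t n‖ ≤ 1 / ((k : ℝ) + 1) := by
  have h : ∀ k : ℕ, ∃ y : X, ‖y‖ ≤ 1 ∧ ∀ n < k, ‖e n y - t n‖ ≤ 1 / ((k : ℝ) + 1) :=
    fun k => realize_pattern he k (by positivity) t ht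
  choose y hy1 hy2 using h
  exact ⟨mkBounded y hy1, mkBounded_norm_le y hy1, fun k n hn => hy2 k n hn⟩

include h𝒰 in
theorem innerLim_patternSeq {t : ℕ → 𝕜} {x : BoundedSeq X}
    (hx : ∀ k n, n < k → ‖e n (x k) - t n‖ ≤ 1 / ((k : ℝ) + 1)) (n : ℕ) :
    ulim 𝒰 (fun k => e n (x k)) = t n := by
  refine ulim_eq ?_
  have h0 : Tendsto (fun k => e n (x k) - t n) 𝒰 (𝓝 0) := by
    refine squeeze_zero_norm' ?_ (tendsto_one_div_succ h𝒰)
    filter_upwards [eventually_large h𝒰 (n + 1)] with k hk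
    exact hx k n (by omega)
  have h1 := h0.add_const (t n)
  rw [zero_add] at h1
  refine h1.congr fun k => ?_
  abel

include h𝒰 in
theorem phi_patternSeq (he1 : ∀ n, ‖e n‖ ≤ 1) {t : ℕ → 𝕜} {x : BoundedSeq X}
    (hx : ∀ k n, n < k → ‖e n (x k) - t n‖ ≤ 1 / ((k : ℝ) + 1)) (𝒱 : Ultrafilter ℕ) :
    phi 𝒰 𝒱 he1 (up 𝕜 𝒰 x) = ulim 𝒱 t := by
  rw [phi_apply_up]
  congr 1
  funext n
  exact innerLim_patternSeq h𝒰 hx n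

end MainAux

end UPAux


open UPAux in
set_option maxHeartbeats 1600000 in
/-- Let `𝕜` be `ℝ` or `ℂ` and let `X` be an infinite-dimensional normed
space over `𝕜` whose dual contains an isometric copy of `ℓ¹`.  Then `(X^𝒰)*` contains an
isometric copy of `ℓ¹(I)` with `#I = 2^(2^ℵ₀)`, meeting the image of the canonical
isometry `j : (X*)^𝒰 → (X^𝒰)*` only in `0`. -/
theorem dual_of_ultrapower_contains_large_ell_one
    (𝒰 : Ultrafilter ℕ) (h𝒰 : (𝒰 : Filter ℕ) ≤ Filter.cofinite)
    {𝕜 : Type*} [RCLike 𝕜] (X : Type*) [NormedAddCommGroup X] [NormedSpace 𝕜 X]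
    (hdim : ¬ FiniteDimensional 𝕜 X)
    (e : ℕ → StrongDual 𝕜 X)
    (he : ∀ (m : ℕ) (r : ℕ → 𝕜),
      ‖∑ n ∈ Finset.range m, r n • e n‖ = ∑ n ∈ Finset.range m, ‖r n‖) :
    ∃ (I : Type) (_ : Cardinal.mk I = (2 : Cardinal) ^ ((2 : Cardinal) ^ Cardinal.aleph0))
      (J : lp (fun _ : I => 𝕜) 1 →ₗᵢ[𝕜] StrongDual 𝕜 (Ultrapower 𝕜 𝒰 X)),
      ∀ f : lp (fun _ : I => 𝕜) 1, f ≠ 0 → ¬ InCanonicalImage 𝕜 𝒰 (J f) := by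
  classical
  have he1 : ∀ n, ‖e n‖ ≤ 1 := fun n => (norm_e he n).le
  set NPU : Type := {𝒱 : Ultrafilter ℕ // (𝒱 : Filter ℕ) ≤ Filter.cofinite} with hNPU
  set Φ : NPU → StrongDual 𝕜 (Ultrapower 𝕜 𝒰 X) := fun i => phi 𝒰 i.1 he1 with hΦdef
  have hΦnorm : ∀ i, ‖Φ i‖ ≤ 1 := fun i => phi_norm_le 𝒰 i.1 he1
  have hsumnorm : ∀ f : lp (fun _ : NPU => 𝕜) 1, Summable (fun i => ‖f i‖) := by
    intro f
    have h := (lp.memℓp f).summable (by norm_num : 0 < (1 : ℝ≥0∞).toReal)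
    simpa using h
  have hnormf : ∀ f : lp (fun _ : NPU => 𝕜) 1, ‖f‖ = ∑' i, ‖f i‖ := by
    intro f
    rw [lp.norm_eq_tsum_rpow (by norm_num) f]
    simp
  have hsummand : ∀ (f : lp (fun _ : NPU => 𝕜) 1) i, ‖f i • Φ i‖ ≤ ‖f i‖ := by
    intro f i
    refine le_trans (ContinuousLinearMap.opNorm_smul_le _ _) ?_
    calc ‖f i‖ * ‖Φ i‖ ≤ ‖f i‖ * 1 := by gcongr; exact hΦnorm i
      _ = ‖f i‖ := mul_one _
  have hsmul_norm_sum : ∀ f : lp (fun _ : NPU => 𝕜) 1, Summable (fun i => ‖f i • Φ i‖) :=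
    fun f => Summable.of_nonneg_of_le (fun i => norm_nonneg (f i • Φ i)) (hsummand f) (hsumnorm f)
  have hsmul_sum : ∀ f : lp (fun _ : NPU => 𝕜) 1, Summable (fun i => f i • Φ i) :=
    fun f => Summable.of_norm (E := StrongDual 𝕜 (Ultrapower 𝕜 𝒰 X)) (hsmul_norm_sum f)
  set Jfun : lp (fun _ : NPU => 𝕜) 1 → StrongDual 𝕜 (Ultrapower 𝕜 𝒰 X) :=
    fun f => ∑' i, f i • Φ i with hJfun
  have happly : ∀ (f : lp (fun _ : NPU => 𝕜) 1) (q : Ultrapower 𝕜 𝒰 X),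
      Jfun f q = ∑' i, f i * Φ i q := by
    intro f q
    calc Jfun f q
        = (NormedSpace.inclusionInDoubleDual 𝕜 (Ultrapower 𝕜 𝒰 X) q) (∑' i, f i • Φ i) := by rw [NormedSpace.dual_def]
      _ = ∑' i, (NormedSpace.inclusionInDoubleDual 𝕜 (Ultrapower 𝕜 𝒰 X) q) (f i • Φ i) :=
          ContinuousLinearMap.map_tsum _ (hsmul_sum f)
      _ = ∑' i, f i * Φ i q := by
          refine tsum_congr fun i => ?_
          simp [NormedSpace.dual_def, ContinuousLinearMap.smul_apply, smul_eq_mul]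
  have hbound : ∀ (f : lp (fun _ : NPU => 𝕜) 1) (q : Ultrapower 𝕜 𝒰 X), ‖q‖ ≤ 1 →
      ∀ i, ‖f i * Φ i q‖ ≤ ‖f i‖ := by
    intro f q hq i
    rw [norm_mul]
    have h1 : ‖Φ i q‖ ≤ 1 :=
      le_trans ((Φ i).le_opNorm q) (mul_le_one₀ (hΦnorm i) (norm_nonneg q) hq)
    calc ‖f i‖ * ‖Φ i q‖ ≤ ‖f i‖ * 1 := by gcongr
      _ = ‖f i‖ := mul_one _
  have hqsumnorm : ∀ (f : lp (fun _ : NPU => 𝕜) 1) (q : Ultrapower 𝕜 𝒰 X), ‖q‖ ≤ 1 →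
      Summable (fun i => ‖f i * Φ i q‖) := fun f q hq =>
    Summable.of_nonneg_of_le (fun i => norm_nonneg _) (hbound f q hq) (hsumnorm f)
  have hqsum : ∀ (f : lp (fun _ : NPU => 𝕜) 1) (q : Ultrapower 𝕜 𝒰 X), ‖q‖ ≤ 1 →
      Summable (fun i => f i * Φ i q) := fun f q hq => (hqsumnorm f q hq).of_norm
  have hupnorm : ∀ x : BoundedSeq X, ‖x‖ ≤ 1 → ‖up 𝕜 𝒰 x‖ ≤ 1 := fun x hx =>
    le_trans (Submodule.Quotient.norm_mk_le _ x) hx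
  -- linearity
  have hadd : ∀ f g : lp (fun _ : NPU => 𝕜) 1, Jfun (f + g) = Jfun f + Jfun g := by
    intro f g
    calc Jfun (f + g) = ∑' i, ((f + g) i) • Φ i := rfl
      _ = ∑' i, (f i • Φ i + g i • Φ i) := by
          refine tsum_congr fun i => ?_
          rw [lp.coeFn_add, Pi.add_apply]; exact add_smul (M := StrongDual 𝕜 (Ultrapower 𝕜 𝒰 X)) _ _ _
      _ = Jfun f + Jfun g := Summable.tsum_add (hsmul_sum f) (hsmul_sum g)
  have hsmulJ : ∀ (c : 𝕜) (f : lp (fun _ : NPU => 𝕜) 1), Jfun (c • f) = c • Jfun f := by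
    intro c f
    calc Jfun (c • f) = ∑' i, ((c • f) i) • Φ i := rfl
      _ = ∑' i, c • (f i • Φ i) := by
          refine tsum_congr fun i => ?_
          rw [lp.coeFn_smul, Pi.smul_apply, smul_assoc]
      _ = c • Jfun f := Summable.tsum_const_smul c (hsmul_sum f)
  -- upper bound
  have hupper : ∀ f : lp (fun _ : NPU => 𝕜) 1, ‖Jfun f‖ ≤ ‖f‖ := by
    intro f
    calc ‖Jfun f‖ ≤ ∑' i, ‖f i • Φ i‖ := norm_tsum_le_tsum_norm (E := StrongDual 𝕜 (Ultrapower 𝕜 𝒰 X)) (hsmul_norm_sum f)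
      _ ≤ ∑' i, ‖f i‖ := Summable.tsum_le_tsum (hsummand f) (hsmul_norm_sum f) (hsumnorm f)
      _ = ‖f‖ := (hnormf f).symm
  -- pattern evaluation for indicator patterns
  have hpattern_eval : ∀ (f : lp (fun _ : NPU => 𝕜) 1) (T : Set ℕ) (x : BoundedSeq X)
      (t : ℕ → 𝕜), (∀ n ∈ T, t n = 1) → (∀ n ∉ T, t n = 0) →
      (∀ k n, n < k → ‖e n (x k) - t n‖ ≤ 1 / ((k : ℝ) + 1)) →
      Jfun f (up 𝕜 𝒰 x) = ∑' i : NPU, f i * (if T ∈ i.1 then 1 else 0) := by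
    intro f T x t ht1 ht0 hx
    rw [happly]
    refine tsum_congr fun i => ?_
    congr 1
    rw [hΦdef]
    rw [phi_patternSeq h𝒰 he1 hx i.1]
    exact ulim_charfn i.1 T t ht1 ht0
  -- lower bound (isometry)
  have hlower : ∀ f : lp (fun _ : NPU => 𝕜) 1, ‖f‖ ≤ ‖Jfun f‖ := by
    intro f
    have hmain : ∀ ε : ℝ, 0 < ε → ‖f‖ ≤ ‖Jfun f‖ + 2 * ε := by
      intro ε hε
      obtain ⟨F, hF⟩ := exists_tail_small (hsumnorm f) hε
      obtain ⟨A, hA1, hA2⟩ := exists_disjoint_mem F (fun i : NPU => i.1)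
        (fun i _ j _ hij h => hij (Subtype.ext h))
      set sg : NPU → 𝕜 := fun i =>
        if f i = 0 then 1 else (starRingEnd 𝕜) (f i) / ((‖f i‖ : ℝ) : 𝕜) with hsg
      have hsg1 : ∀ i, ‖sg i‖ = 1 := by
        intro i
        simp only [hsg]
        by_cases h : (f : NPU → 𝕜) i = 0
        · rw [if_pos h, norm_one]
        · rw [if_neg h, norm_div, RCLike.norm_conj, RCLike.norm_ofReal,
            abs_of_nonneg (norm_nonneg _), div_self (norm_ne_zero_iff.2 h)]
      have hsgmul : ∀ i, f i * sg i = ((‖f i‖ : ℝ) : 𝕜) := by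
        intro i
        simp only [hsg]
        by_cases h : (f : NPU → 𝕜) i = 0
        · rw [if_pos h, h, zero_mul, norm_zero, RCLike.ofReal_zero]
        · rw [if_neg h, mul_div_assoc', RCLike.mul_conj, sq, mul_div_assoc,
            div_self (RCLike.ofReal_ne_zero.2 (norm_ne_zero_iff.2 h)), mul_one]
      set t : ℕ → 𝕜 := fun n => if h : ∃ i, i ∈ F ∧ n ∈ A i then sg h.choose else 0 with ht
      have htpat : ∀ n, t n = 0 ∨ ‖t n‖ = 1 := by
        intro n
        simp only [ht]
        by_cases h : ∃ i, i ∈ F ∧ n ∈ A i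
        · right; rw [dif_pos h]; exact hsg1 _
        · left; rw [dif_neg h]
      obtain ⟨x, hxnorm, hxk⟩ := exists_patternSeq he t htpat
      have hqn : ‖up 𝕜 𝒰 x‖ ≤ 1 := hupnorm x hxnorm
      have hΦval : ∀ i ∈ F, Φ i (up 𝕜 𝒰 x) = sg i := by
        intro i hi
        rw [hΦdef, phi_patternSeq h𝒰 he1 hxk i.1]
        refine ulim_eventually_const ?_
        have hev : ∀ᶠ n in (i.1 : Filter ℕ), n ∈ A i := by
          rw [Filter.eventually_iff, Set.setOf_mem_eq]
          exact hA1 i hi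
        filter_upwards [hev] with n hn
        simp only [ht]
        have hex : ∃ j, j ∈ F ∧ n ∈ A j := ⟨i, hi, hn⟩
        rw [dif_pos hex]
        have hchoose : hex.choose = i := by
          by_contra hne
          obtain ⟨hjF, hjA⟩ := hex.choose_spec
          exact (Set.disjoint_left.1 (hA2 _ hjF i hi hne) hjA) hn
        rw [hchoose]
      have heval := happly f (up 𝕜 𝒰 x)
      have hsplit := Summable.sum_add_tsum_compl (s := F) (hqsum f (up 𝕜 𝒰 x) hqn)
      have hfin : ∑ i ∈ F, f i * Φ i (up 𝕜 𝒰 x) = ((∑ i ∈ F, ‖f i‖ : ℝ) : 𝕜) := by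
        rw [RCLike.ofReal_sum]
        refine Finset.sum_congr rfl fun i hi => ?_
        rw [hΦval i hi, hsgmul i]
      have htailnorm : ‖∑' (i : ↑((↑F : Set NPU)ᶜ)), f i * Φ i (up 𝕜 𝒰 x)‖ ≤ ε := by
        calc ‖∑' (i : ↑((↑F : Set NPU)ᶜ)), f i * Φ i (up 𝕜 𝒰 x)‖
            ≤ ∑' (i : ↑((↑F : Set NPU)ᶜ)), ‖f i * Φ i (up 𝕜 𝒰 x)‖ :=
              norm_tsum_le_tsum_norm ((hqsumnorm f (up 𝕜 𝒰 x) hqn).subtype _)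
          _ ≤ ∑' (i : ↑((↑F : Set NPU)ᶜ)), ‖f i‖ :=
              Summable.tsum_le_tsum (fun i => hbound f (up 𝕜 𝒰 x) hqn i)
                ((hqsumnorm f (up 𝕜 𝒰 x) hqn).subtype _) ((hsumnorm f).subtype _)
          _ ≤ ε := hF.le
      have hre : (∑ i ∈ F, ‖f i‖) - ε ≤ ‖Jfun f (up 𝕜 𝒰 x)‖ := by
        have h1 : RCLike.re (Jfun f (up 𝕜 𝒰 x))
            = (∑ i ∈ F, ‖f i‖) + RCLike.re (∑' (i : ↑((↑F : Set NPU)ᶜ)), f i * Φ i (up 𝕜 𝒰 x)) := by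
          rw [heval, ← hsplit, map_add, hfin, RCLike.ofReal_re]
        have h2 : |RCLike.re (∑' (i : ↑((↑F : Set NPU)ᶜ)), f i * Φ i (up 𝕜 𝒰 x))| ≤ ε :=
          le_trans (RCLike.abs_re_le_norm _) htailnorm
        have h3 := abs_le.1 h2
        calc (∑ i ∈ F, ‖f i‖) - ε ≤ RCLike.re (Jfun f (up 𝕜 𝒰 x)) := by linarith
          _ ≤ ‖Jfun f (up 𝕜 𝒰 x)‖ := RCLike.re_le_norm _
      have hJx : ‖Jfun f (up 𝕜 𝒰 x)‖ ≤ ‖Jfun f‖ := by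
        calc ‖Jfun f (up 𝕜 𝒰 x)‖ ≤ ‖Jfun f‖ * ‖up 𝕜 𝒰 x‖ := (Jfun f).le_opNorm _
          _ ≤ ‖Jfun f‖ * 1 := by gcongr
          _ = ‖Jfun f‖ := mul_one _
      have hsumF : ‖f‖ ≤ (∑ i ∈ F, ‖f i‖) + ε := by
        have h4 := Summable.sum_add_tsum_compl (s := F) (hsumnorm f)
        rw [hnormf f]
        linarith
      linarith
    by_contra hcon
    push_neg at hcon
    have hd : 0 < (‖f‖ - ‖Jfun f‖) / 4 := by linarith
    have := hmain _ hd
    linarith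
  -- the isometry
  set J : lp (fun _ : NPU => 𝕜) 1 →ₗᵢ[𝕜] StrongDual 𝕜 (Ultrapower 𝕜 𝒰 X) :=
    { toFun := Jfun
      map_add' := hadd
      map_smul' := hsmulJ
      norm_map' := fun f => le_antisymm (hupper f) (hlower f) } with hJdef
  refine ⟨NPU, card_nonprincipal_ultrafilters, J, ?_⟩
  -- non-membership
  intro f hf hIm
  obtain ⟨g, -, hg⟩ := hIm
  have hJcoe : ∀ q, (J f) q = Jfun f q := fun q => rfl
  have hfne : ∃ i₀ : NPU, f i₀ ≠ 0 := by
    by_contra hc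
    push_neg at hc
    refine hf (lp.ext (funext fun i => ?_))
    rw [hc i, lp.coeFn_zero, Pi.zero_apply]
  obtain ⟨i₀, hi₀⟩ := hfne
  have hfi₀pos : 0 < ‖f i₀‖ := norm_pos_iff.2 hi₀
  obtain ⟨F₀, hF₀⟩ := exists_tail_small (hsumnorm f)
    (show 0 < ‖f i₀‖ / 4 by linarith)
  set F : Finset NPU := insert i₀ F₀ with hFdef
  have htail : ∑' (i : ↑((↑F : Set NPU)ᶜ)), ‖f i‖ < ‖f i₀‖ / 4 := by
    have h1 := Summable.sum_add_tsum_compl (s := F) (hsumnorm f)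
    have h2 := Summable.sum_add_tsum_compl (s := F₀) (hsumnorm f)
    have h3 : ∑ i ∈ F₀, ‖f i‖ ≤ ∑ i ∈ F, ‖f i‖ :=
      Finset.sum_le_sum_of_subset_of_nonneg (Finset.subset_insert _ _)
        (fun i _ _ => norm_nonneg _)
    linarith
  obtain ⟨A, hA1, hA2⟩ := exists_disjoint_mem F (fun i : NPU => i.1)
    (fun i _ j _ hij h => hij (Subtype.ext h))
  have hAmem : A i₀ ∈ i₀.1 := hA1 i₀ (Finset.mem_insert_self _ _)
  set c : NPU → 𝕜 := fun i => if A i₀ ∈ i.1 then 1 else 0 with hc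
  have hcnorm : ∀ i, ‖f i * c i‖ ≤ ‖f i‖ := by
    intro i
    simp only [hc]
    rw [norm_mul]
    by_cases h : A i₀ ∈ i.1
    · rw [if_pos h, norm_one, mul_one]
    · rw [if_neg h, norm_zero, mul_zero]; exact norm_nonneg _
  have hsumc : Summable (fun i => f i * c i) :=
    Summable.of_norm (Summable.of_nonneg_of_le (fun i => norm_nonneg _) hcnorm (hsumnorm f))
  set β : 𝕜 := ∑' i, f i * c i with hβ
  have hfin : ∑ i ∈ F, f i * c i = f i₀ := by
    rw [Finset.sum_eq_single i₀]
    · simp only [hc]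
      rw [if_pos hAmem, mul_one]
    · intro i hiF hne
      have hczero : c i = 0 := by
        simp only [hc]
        rw [if_neg]
        intro hmem
        have hdisj := hA2 i hiF i₀ (Finset.mem_insert_self _ _) hne
        have hint := Filter.inter_mem (hA1 i hiF) hmem
        rw [Set.disjoint_iff_inter_eq_empty.1 hdisj] at hint
        exact Filter.empty_notMem _ hint
      rw [hczero, mul_zero]
    · intro h
      exact absurd (Finset.mem_insert_self i₀ F₀) h
  have hβlower : 3 / 4 * ‖f i₀‖ ≤ ‖β‖ := by
    have hsplit := Summable.sum_add_tsum_compl (s := F) hsumc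
    have htail2 : ‖∑' (i : ↑((↑F : Set NPU)ᶜ)), f i * c i‖ ≤ ‖f i₀‖ / 4 := by
      calc ‖∑' (i : ↑((↑F : Set NPU)ᶜ)), f i * c i‖
          ≤ ∑' (i : ↑((↑F : Set NPU)ᶜ)), ‖f i * c i‖ :=
            norm_tsum_le_tsum_norm
              ((Summable.of_nonneg_of_le (fun i => norm_nonneg _) hcnorm (hsumnorm f)).subtype _)
        _ ≤ ∑' (i : ↑((↑F : Set NPU)ᶜ)), ‖f i‖ :=
            Summable.tsum_le_tsum (fun i => hcnorm i)
              ((Summable.of_nonneg_of_le (fun i => norm_nonneg _) hcnorm (hsumnorm f)).subtype _)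
              ((hsumnorm f).subtype _)
        _ ≤ ‖f i₀‖ / 4 := htail.le
    have hβeq : β = f i₀ + ∑' (i : ↑((↑F : Set NPU)ᶜ)), f i * c i := by
      rw [hβ, ← hsplit, hfin]
    have h5 : ‖f i₀‖ ≤ ‖β‖ + ‖∑' (i : ↑((↑F : Set NPU)ᶜ)), f i * c i‖ := by
      have : f i₀ = β - ∑' (i : ↑((↑F : Set NPU)ᶜ)), f i * c i := by
        rw [hβeq]; ring
      rw [this]
      exact norm_sub_le _ _
    linarith
  have hβpos : 0 < ‖β‖ := by
    have : 0 < ‖f i₀‖ := norm_pos_iff.2 hi₀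
    linarith
  set w : 𝕜 := (starRingEnd 𝕜) β / ((‖β‖ : ℝ) : 𝕜) with hw
  have hwβ : RCLike.re (w * β) = ‖β‖ := by
    rw [hw, div_mul_eq_mul_div, RCLike.conj_mul, sq, mul_div_assoc,
      div_self (RCLike.ofReal_ne_zero.2 hβpos.ne'), mul_one, RCLike.ofReal_re]
  set τ : ℝ := ‖β‖ / 2 with hτ
  have hτpos : 0 < τ := by rw [hτ]; linarith
  set S : ℕ → Set ℕ := fun d => {n | n ∈ A i₀ ∧ d ≤ n} with hSdef
  have hSmem : ∀ d (i : NPU), S d ∈ i.1 ↔ A i₀ ∈ i.1 := by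
    intro d i
    constructor
    · intro h
      exact Filter.mem_of_superset h (fun n hn => hn.1)
    · intro h
      have h2 : {n : ℕ | d ≤ n} ∈ i.1 := by
        apply i.2
        rw [Filter.mem_cofinite]
        refine (Set.finite_Iio d).subset ?_
        intro n hn
        simpa [Set.mem_Iio, not_le] using hn
      exact Filter.inter_mem h h2
  have hβval : ∀ d, (∑' i : NPU, f i * (if S d ∈ i.1 then 1 else 0)) = β := by
    intro d
    rw [hβ]
    refine tsum_congr fun i => ?_
    congr 1
    simp only [hc]
    by_cases h : A i₀ ∈ i.1
    · rw [if_pos ((hSmem d i).2 h), if_pos h]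
    · rw [if_neg (fun hh => h ((hSmem d i).1 hh)), if_neg h]
  -- the adversarial predicate
  set P : ℕ → ℕ → Prop := fun k d => ∃ y : X, ‖y‖ ≤ 1 ∧
      (∀ n < k, ‖e n y - (if n ∈ S d then (1 : 𝕜) else 0)‖ ≤ 1 / ((k : ℝ) + 1)) ∧
      τ < RCLike.re (w * g k y) with hP
  have hPmem : ∀ d, {k | P k d} ∈ 𝒰 := by
    intro d
    by_contra hc'
    have hcompl : {k | P k d}ᶜ ∈ 𝒰 := Ultrafilter.compl_mem_iff_notMem.2 hc'
    obtain ⟨x, hxn, hxk⟩ := exists_patternSeq he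
      (fun n => if n ∈ S d then (1 : 𝕜) else 0)
      (fun n => by by_cases h : n ∈ S d <;> simp [h])
    have heq : Jfun f (up 𝕜 𝒰 x) = β := by
      rw [hpattern_eval f (S d) x _ (fun n hn => if_pos hn) (fun n hn => if_neg hn) hxk,
        hβval d]
    have htd : Tendsto (fun k => g k (x k)) 𝒰 (𝓝 β) := by
      have := hg x
      rwa [hJcoe, heq] at this
    have htd2 : Tendsto (fun k => RCLike.re (w * g k (x k))) 𝒰 (𝓝 (RCLike.re (w * β))) :=
      (RCLike.continuous_re.tendsto _).comp (htd.const_mul w)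
    have hev : ∀ᶠ k in (𝒰 : Filter ℕ), RCLike.re (w * g k (x k)) ≤ τ := by
      have hev0 : ∀ᶠ k in (𝒰 : Filter ℕ), ¬ P k d := hcompl
      filter_upwards [hev0] with k hk
      by_contra hgt
      push_neg at hgt
      exact hk ⟨x k, le_trans (norm_coord_le x k) hxn, fun n hn => hxk k n hn, hgt⟩
    have hle := le_of_tendsto htd2 hev
    rw [hwβ] at hle
    rw [hτ] at hle
    linarith
  set D : ℕ → ℕ := fun k => Nat.findGreatest (fun d => P k d) k with hD
  have hDlarge : ∀ d, ∀ᶠ k in (𝒰 : Filter ℕ), d ≤ D k := by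
    intro d
    have h1 : ∀ᶠ k in (𝒰 : Filter ℕ), P k d := hPmem d
    filter_upwards [h1, eventually_large h𝒰 d] with k hk1 hk2
    exact Nat.le_findGreatest hk2 hk1
  have hPk : ∀ᶠ k in (𝒰 : Filter ℕ), P k (D k) := by
    have h1 : ∀ᶠ k in (𝒰 : Filter ℕ), P k 0 := hPmem 0
    filter_upwards [h1] with k hk
    exact Nat.findGreatest_spec (Nat.zero_le k) hk
  set xw : ℕ → X := fun k => if h : P k (D k) then h.choose else 0 with hxw
  have hxwnorm : ∀ k, ‖xw k‖ ≤ 1 := by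
    intro k
    simp only [hxw]
    by_cases h : P k (D k)
    · rw [dif_pos h]; exact h.choose_spec.1
    · rw [dif_neg h]; simp
  set xb : BoundedSeq X := mkBounded xw hxwnorm with hxb
  have hinner : ∀ n, ulim 𝒰 (fun k => e n (xb k)) = 0 := by
    intro n
    refine ulim_eq ?_
    refine squeeze_zero_norm' ?_ (tendsto_one_div_succ h𝒰)
    filter_upwards [hPk, hDlarge (n + 1), eventually_large h𝒰 (n + 1)] with k h1 h2 h3
    have hxbk : xb k = xw k := rfl
    rw [hxbk]
    simp only [hxw]
    rw [dif_pos h1]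
    have hb := h1.choose_spec.2.1 n (by omega)
    have ht0 : (if n ∈ S (D k) then (1 : 𝕜) else 0) = 0 := by
      rw [if_neg]
      intro hn
      simp only [hSdef, Set.mem_setOf_eq] at hn
      exact absurd hn.2 (by omega)
    rw [ht0, sub_zero] at hb
    exact hb
  have hzero : Jfun f (up 𝕜 𝒰 xb) = 0 := by
    rw [happly]
    have hterm : ∀ i : NPU, f i * Φ i (up 𝕜 𝒰 xb) = 0 := by
      intro i
      have h1 : Φ i (up 𝕜 𝒰 xb) = ulim i.1 (fun n => ulim 𝒰 (fun k => e n (xb k))) := by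
        rw [hΦdef]
        exact phi_apply_up 𝒰 i.1 he1 xb
      have h2 : (fun n => ulim 𝒰 (fun k => e n (xb k))) = fun _ => (0 : 𝕜) := funext hinner
      rw [h1, h2, ulim_const, mul_zero]
    rw [tsum_congr hterm, tsum_zero]
  have htd : Tendsto (fun k => g k (xb k)) 𝒰 (𝓝 0) := by
    have := hg xb
    rwa [hJcoe, hzero] at this
  have htd2 : Tendsto (fun k => RCLike.re (w * g k (xb k))) 𝒰 (𝓝 0) := by
    have h1 : Tendsto (fun k => w * g k (xb k)) 𝒰 (𝓝 (w * 0)) := htd.const_mul w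
    rw [mul_zero] at h1
    have h2 := (RCLike.continuous_re.tendsto _).comp h1
    rwa [map_zero] at h2
  have hev : ∀ᶠ k in (𝒰 : Filter ℕ), τ ≤ RCLike.re (w * g k (xb k)) := by
    filter_upwards [hPk] with k hk
    have hxbk : xb k = xw k := rfl
    have hxwk : xw k = hk.choose := by simp only [hxw]; rw [dif_pos hk]
    have := hk.choose_spec.2.2
    rw [hxbk, hxwk]
    exact this.le
  have hge := ge_of_tendsto htd2 hev
  linarith
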